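/- Let D = ⟨R_D, C_D, ≺_D⟩ be a defeasible theory with C_D[p] finite for all p ∈ Lit(D), let E be its defeater- and priority-free form, and let ⟨T_{D,WF}, F_{D,WF}⟩ and ⟨T_{E,WF}, F_{E,WF}⟩ be the well-founded models of D and E (both taken under ADL, or both under NDL). Then for every literal p: if p ∈ T_{D,WF} then p ∈ T_{E,WF}, and if p ∈ F_{D,WF} then p ∈ F_{E,WF}. -/

import Mathlib

namespace DLWFS

universe u

/-- Ground literals over a type `A` of atoms: atoms and their classical complements. -/
inductive Lit (A : Type u) : Type u where
  | pos : A → Lit A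
  | neg : A → Lit A

/-- The classical complement `p̄` of a literal `p`. -/
def Lit.compl {A : Type u} : Lit A → Lit A
  | .pos a => .neg a
  | .neg a => .pos a

/-- The three kinds of rules of a defeasible theory. -/
inductive RuleKind : Type where
  | strict
  | defeasible
  | defeater
deriving DecidableEq

/-- A rule of a defeasible theory: a kind, a body (a set of literals) and a head literal. -/
structure DRule (A : Type u) where
  kind : RuleKind
  body : Set (Lit A)
  head : Lit A

/-- A defeasible theory `D = ⟨R, C, ≺⟩`. -/
structure DTheory (A : Type u) where
  rules : Set (DRule A)
  conflicts : Set (Set (Lit A))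
  prec : DRule A → DRule A → Prop

namespace DTheory

variable {A : Type u}

/-- The strict rules `R_s`. -/
def Rs (D : DTheory A) : Set (DRule A) := {r ∈ D.rules | r.kind = RuleKind.strict}

/-- The defeasible rules `R_d`. -/
def Rd (D : DTheory A) : Set (DRule A) := {r ∈ D.rules | r.kind = RuleKind.defeasible}

/-- The defeater rules `R_u`. -/
def Ru (D : DTheory A) : Set (DRule A) := {r ∈ D.rules | r.kind = RuleKind.defeater}

/-- `C[p]`: the conflict sets containing literal `p`. -/
def Cset (D : DTheory A) (p : Lit A) : Set (Set (Lit A)) := {c ∈ D.conflicts | p ∈ c}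

/-- Structural conditions in the definition of a defeasible theory: a countable set of
rules with finite bodies, a countable set of finite conflict sets containing every
minimal conflict set `{p, ¬p}`, and an acyclic priority relation over non-strict rules. -/
def WellFormed (D : DTheory A) : Prop :=
  D.rules.Countable ∧ D.conflicts.Countable ∧
  (∀ r ∈ D.rules, r.body.Finite) ∧
  (∀ c ∈ D.conflicts, c.Finite) ∧
  (∀ p : A, ({Lit.pos p, Lit.neg p} : Set (Lit A)) ∈ D.conflicts) ∧
  (∀ r s, D.prec r s → r.kind ≠ RuleKind.strict ∧ s.kind ≠ RuleKind.strict) ∧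
  (∀ r, ¬ Relation.TransGen D.prec r r)

/-- `C = C_MIN`: the conflict sets are exactly the minimal ones `{p, ¬p}`. -/
def MinimalConflicts (D : DTheory A) : Prop :=
  D.conflicts = {c | ∃ p : A, c = ({Lit.pos p, Lit.neg p} : Set (Lit A))}

end DTheory

/-- A 3-valued interpretation: a pair `⟨T, F⟩` of sets. -/
abbrev Interp (L : Type u) : Type u := Set L × Set L

variable {A : Type u}

/-- `S` is ADL-unfounded with respect to theory `D` and interpretation `I = ⟨T, F⟩`. -/
def ADLUnfounded (D : DTheory A) (I : Interp (Lit A)) (S : Set (Lit A)) : Prop :=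
  ∀ p ∈ S,
    (∀ r ∈ D.Rs, r.head = p → (r.body ∩ (I.2 ∪ S)).Nonempty) ∧
    (∀ r ∈ D.Rd, r.head = p →
      (r.body ∩ (I.2 ∪ S)).Nonempty ∨
      ∃ c ∈ D.conflicts, p ∈ c ∧
        ∀ q ∈ c \ {p}, ∃ s ∈ D.rules, s.head = q ∧ s.body ⊆ I.1 ∧
          (D.prec r s ∨ s.kind = RuleKind.strict))

/-- `S` is NDL-unfounded with respect to theory `D` and interpretation `I = ⟨T, F⟩`. -/
def NDLUnfounded (D : DTheory A) (I : Interp (Lit A)) (S : Set (Lit A)) : Prop :=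
  ∀ p ∈ S,
    (∀ r ∈ D.Rs, r.head = p → (r.body ∩ (I.2 ∪ S)).Nonempty) ∧
    (∀ r ∈ D.Rd, r.head = p →
      (r.body ∩ (I.2 ∪ S)).Nonempty ∨
      ∃ c ∈ D.conflicts, p ∈ c ∧
        ∀ q ∈ c \ {p}, ∃ s ∈ D.rules, s.head = q ∧ s.body ⊆ I.1 ∧
          ¬ D.prec s r)

/-- `U_D(I)` for ADL: the union of all ADL-unfounded sets. -/
def UA (D : DTheory A) (I : Interp (Lit A)) : Set (Lit A) :=
  ⋃₀ {S | ADLUnfounded D I S}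

/-- `U_D(I)` for NDL: the union of all NDL-unfounded sets. -/
def UN (D : DTheory A) (I : Interp (Lit A)) : Set (Lit A) :=
  ⋃₀ {S | NDLUnfounded D I S}

/-- `T_D(I)`: the literals having a witness of provability with respect to `I = ⟨T, F⟩`. -/
def TD (D : DTheory A) (I : Interp (Lit A)) : Set (Lit A) :=
  {p | ∃ r ∈ D.rules, r.head = p ∧ r.body ⊆ I.1 ∧
    (r.kind = RuleKind.strict ∨
      (r.kind = RuleKind.defeasible ∧
        ∀ c ∈ D.conflicts, p ∈ c →
          ∃ q ∈ c \ {p}, ∀ s ∈ D.rules, s.head = q →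
            (D.prec s r ∨ (s.body ∩ I.2).Nonempty)))}

/-- `W_D` for ADL. -/
def WA (D : DTheory A) (I : Interp (Lit A)) : Interp (Lit A) := (TD D I, UA D I)

/-- `W_D` for NDL. -/
def WN (D : DTheory A) (I : Interp (Lit A)) : Interp (Lit A) := (TD D I, UN D I)

/-- `I` is the well-founded model for the operator `W`: the least fixpoint of `W`
(componentwise order). -/
def IsWFModel {L : Type u} (W : Interp L → Interp L) (I : Interp L) : Prop :=
  W I = I ∧ ∀ J, W J = J → I.1 ⊆ J.1 ∧ I.2 ⊆ J.2

/-- A rule of a normal logic program: `head ← pos, ∼neg`. -/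
structure NRule (A : Type u) where
  head : A
  pos : Set A
  neg : Set A

/-- A normal logic program: a set of rules. -/
abbrev NProgram (A : Type u) : Type u := Set (NRule A)

/-- Structural conditions in the definition of a normal logic program: a countable
set of ground rules with finite bodies. -/
def NProgram.WellFormed (P : NProgram A) : Prop :=
  P.Countable ∧ ∀ r ∈ P, r.pos.Finite ∧ r.neg.Finite

/-- The immediate consequence operator `T_Π` on 3-valued interpretations. -/
def TP (P : NProgram A) (I : Interp A) : Set A :=
  {a | ∃ r ∈ P, r.head = a ∧ r.pos ⊆ I.1 ∧ r.neg ⊆ I.2}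

/-- `S` is an unfounded set of program `P` with respect to interpretation `I = ⟨T, F⟩`. -/
def PUnfounded (P : NProgram A) (I : Interp A) (S : Set A) : Prop :=
  ∀ p ∈ S, ∀ r ∈ P, r.head = p →
    (r.pos ∩ (I.2 ∪ S)).Nonempty ∨ (r.neg ∩ I.1).Nonempty

/-- `U_Π(I)`: the greatest unfounded set (union of all unfounded sets). -/
def UP (P : NProgram A) (I : Interp A) : Set A :=
  ⋃₀ {S | PUnfounded P I S}

/-- `W_Π(I) = ⟨T_Π(I), U_Π(I)⟩`. -/
def WP (P : NProgram A) (I : Interp A) : Interp A := (TP P I, UP P I)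

/-- Transfinite iteration of an operator `W` from `⊥`, taking suprema at limit ordinals. -/
noncomputable def iterW {α : Type*} [CompleteLattice α] (W : α → α) : Ordinal.{0} → α :=
  fun o =>
    Ordinal.limitRecOn (motive := fun _ => α) o ⊥ (fun _ ih => W ih)
      (fun o' _ ih => ⨆ x : Set.Iio o', ih x.1 x.2)

/-- One step of the immediate consequence operator for a set of defeasible-theory rules. -/
def TRstep (R : Set (DRule A)) (S : Set (Lit A)) : Set (Lit A) :=
  {p | ∃ r ∈ R, r.head = p ∧ r.body ⊆ S}

/-- The finite iterates `T_R ↑ n`. -/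
def TRiter (R : Set (DRule A)) : ℕ → Set (Lit A)
  | 0 => ∅
  | n + 1 => TRstep R (TRiter R n)

/-- `Cl(R) = T_R ↑ ω`. -/
def ClR (R : Set (DRule A)) : Set (Lit A) := ⋃ n, TRiter R n

/-- The `α`-reduct `D_α^S` of a defeasible theory. -/
def alphaReduct (D : DTheory A) (S : Set (Lit A)) : Set (DRule A) :=
  D.Rs ∪ {r ∈ D.Rd | ∀ c ∈ D.conflicts, r.head ∈ c → ∃ q ∈ c \ {r.head}, q ∉ S}

/-- The ambiguity-propagating operator `α_D(S) = Cl(D_α^S)`. -/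
def alphaOp (D : DTheory A) (S : Set (Lit A)) : Set (Lit A) := ClR (alphaReduct D S)

/-- The `β`-reduct `D_β^S` of a defeasible theory. -/
def betaReduct (D : DTheory A) (S : Set (Lit A)) : Set (DRule A) :=
  D.Rs ∪ {r ∈ D.Rd | ∀ c ∈ D.conflicts, r.head ∈ c →
    ∃ q ∈ c \ {r.head}, ∀ s ∈ D.rules, s.head = q → (¬ s.body ⊆ S ∨ D.prec s r)}

/-- The ambiguity-blocking operator `β_D(S) = Cl(D_β^S)`. -/
def betaOp (D : DTheory A) (S : Set (Lit A)) : Set (Lit A) := ClR (betaReduct D S)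

/-- `S` is an `α`-stable set of `D`. -/
def AlphaStable (D : DTheory A) (S : Set (Lit A)) : Prop := alphaOp D S = S

/-- `S` is a `β`-stable set of `D`. -/
def BetaStable (D : DTheory A) (S : Set (Lit A)) : Prop := betaOp D S = S

/-- The sequence `X_D↑λ`: `X↑0 = ∅`, `X↑(λ+1) = β_D(β_D(X↑λ))`, unions at limits. -/
noncomputable def Xseq (D : DTheory A) : Ordinal.{0} → Set (Lit A) :=
  iterW (fun S => betaOp D (betaOp D S))

/-- The Gelfond–Lifschitz reduct `Π^S`. -/
def glReduct (P : NProgram A) (S : Set A) : NProgram A :=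
  {r' | ∃ r ∈ P, r.neg ∩ S = ∅ ∧ r' = NRule.mk r.head r.pos ∅}

/-- One step of the immediate consequence operator for a NAF-free program. -/
def TPstep (P : NProgram A) (S : Set A) : Set A :=
  {a | ∃ r ∈ P, r.head = a ∧ r.pos ⊆ S}

/-- The finite iterates `T_Π ↑ n` of a NAF-free program. -/
def TPiter (P : NProgram A) : ℕ → Set A
  | 0 => ∅
  | n + 1 => TPstep P (TPiter P n)

/-- `Cl(Π) = T_Π ↑ ω`. -/
def ClP (P : NProgram A) : Set A := ⋃ n, TPiter P n

/-- The Gelfond–Lifschitz operator `γ_Π(S) = Cl(Π^S)`. -/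
def gamma (P : NProgram A) (S : Set A) : Set A := ClP (glReduct P S)

/-- `S` is a stable model of `P`. -/
def StableModel (P : NProgram A) (S : Set A) : Prop := gamma P S = S

/-- `Prod(C[p])`: all sets obtained by choosing one literal other than `p` from each
conflict set containing `p`. -/
def ProdC (D : DTheory A) (p : Lit A) : Set (Set (Lit A)) :=
  {Q | ∃ f : Set (Lit A) → Lit A,
    (∀ c ∈ D.conflicts, p ∈ c → f c ∈ c \ {p}) ∧
    Q = f '' {c ∈ D.conflicts | p ∈ c}}

/-- The logic program translation `Π_D` of a defeasible theory `D` (negative literals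
are treated as fresh atoms, so the atoms of the program are the literals of `D`). -/
def lpTrans (D : DTheory A) : NProgram (Lit A) :=
  {r' | ∃ r ∈ D.Rs, r' = NRule.mk r.head r.body ∅} ∪
  {r' | ∃ r ∈ D.Rd, ∃ Q ∈ ProdC D r.head, r' = NRule.mk r.head r.body Q}

/-- The explicit version `Φ` of a normal program `Π`: atoms of `Φ` are the literals
over the atoms of `Π` (`¬p` being a fresh atom). -/
def explicitVer (P : NProgram A) : NProgram (Lit A) :=
  {r' | ∃ r ∈ P, r' = NRule.mk (Lit.pos r.head) (Lit.pos '' r.pos ∪ Lit.neg '' r.neg) ∅} ∪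
  {r' | ∃ p : A, r' = NRule.mk (Lit.neg p) ∅ {Lit.pos p}}

/-- The minimal conflict sets over atom type `A`. -/
def CMin (A : Type u) : Set (Set (Lit A)) :=
  {c | ∃ p : A, c = ({Lit.pos p, Lit.neg p} : Set (Lit A))}

/-- The defeasible theory translation `D_Π` of a normal program `Π`: each program rule
becomes a strict rule (default literals `∼b` becoming negative literals `¬b`), and each
atom `p` yields a presumption `∅ ⇒ ¬p`; conflict sets are minimal and `≺` is empty. -/
def dtTrans (P : NProgram A) : DTheory A :=
  { rules :=
      {e | ∃ r ∈ P, e = DRule.mk RuleKind.strict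
            (Lit.pos '' r.pos ∪ Lit.neg '' r.neg) (Lit.pos r.head)} ∪
      {e | ∃ p : A, e = DRule.mk RuleKind.defeasible ∅ (Lit.neg p)}
    conflicts := CMin A
    prec := fun _ _ => False }

/-- `M^¬ = M ∪ {¬p : p ∉ M}`, atoms being identified with positive literals. -/
def negCompl (M : Set A) : Set (Lit A) :=
  Lit.pos '' M ∪ Lit.neg '' {p | p ∉ M}

end DLWFS

namespace DLWFS

variable {A : Type u}

/-- The fresh atom `su(r)` of the defeater- and priority-free form, as a literal. -/
def suLit (r : DRule A) : Lit (A ⊕ DRule A × Bool) := Lit.pos (Sum.inr (r, true))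

/-- The fresh atom `fi(r)` of the defeater- and priority-free form, as a literal. -/
def fiLit (r : DRule A) : Lit (A ⊕ DRule A × Bool) := Lit.pos (Sum.inr (r, false))

/-- The literal `¬fi(r)`. -/
def nfiLit (r : DRule A) : Lit (A ⊕ DRule A × Bool) := Lit.neg (Sum.inr (r, false))

/-- Embedding of the literals of `D` into the literals of its defeater- and
priority-free form. -/
def liftLit : Lit A → Lit (A ⊕ DRule A × Bool)
  | .pos a => .pos (Sum.inl a)
  | .neg a => .neg (Sum.inl a)

/-- `RuleKind.strict` if the proposition holds, `RuleKind.defeasible` otherwise. -/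
noncomputable def strictIf (c : Prop) : RuleKind :=
  @ite _ c (Classical.propDecidable c) RuleKind.strict RuleKind.defeasible

/-- The rules of the defeater- and priority-free form `E` of `D`:
(1) for each rule `r : A ⤳ p` of `D`, the strict rule `A → su(r)` and the rule
`{su(r)} → fi(r)` (strict if `r` is strict, defeasible if `r` is defeasible or a
defeater); (2) if `r` is strict or defeasible, the strict rule `{fi(r)} → p`;
(3) for each conflict set `c ∈ C_D[head(r)]` with `r` defeasible and each choice of
rules `s q ∈ R_D[q]` (for `q ∈ c − {head(r)}`) with `¬ (s q ≺_D r)`, the rule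
`{su(s q) : q ∈ c − {head r}} ⟶ ¬fi(r)`, strict if every `s q` is strict or satisfies
`r ≺_D s q`, and defeasible otherwise. -/
noncomputable def EFormRules (D : DTheory A) : Set (DRule (A ⊕ DRule A × Bool)) :=
  {e | ∃ r ∈ D.rules, e = DRule.mk RuleKind.strict (liftLit '' r.body) (suLit r)} ∪
  {e | ∃ r ∈ D.rules,
    e = DRule.mk (strictIf (r.kind = RuleKind.strict)) {suLit r} (fiLit r)} ∪
  {e | ∃ r ∈ D.rules, r.kind ≠ RuleKind.defeater ∧
    e = DRule.mk RuleKind.strict {fiLit r} (liftLit r.head)} ∪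
  {e | ∃ r ∈ D.Rd, ∃ c ∈ D.conflicts, r.head ∈ c ∧
    ∃ s : Lit A → DRule A,
      (∀ q ∈ c \ {r.head}, s q ∈ D.rules ∧ (s q).head = q ∧ ¬ D.prec (s q) r) ∧
      e = DRule.mk
        (strictIf (∀ q ∈ c \ {r.head},
          (s q).kind = RuleKind.strict ∨ D.prec r (s q)))
        ((fun q => suLit (s q)) '' (c \ {r.head})) (nfiLit r)}

/-- The defeater- and priority-free form `E` of a defeasible theory `D`: it uses the
rules above, minimal conflict sets, and the empty priority relation. -/
noncomputable def EForm (D : DTheory A) : DTheory (A ⊕ DRule A × Bool) :=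
  { rules := EFormRules D
    conflicts := CMin (A ⊕ DRule A × Bool)
    prec := fun _ _ => False }

end DLWFS

namespace DLWFS

variable {A : Type u}

lemma strictIf_eq_strict {c : Prop} : strictIf c = RuleKind.strict ↔ c := by
  unfold strictIf; split <;> simp_all

lemma strictIf_eq_defeasible {c : Prop} : strictIf c = RuleKind.defeasible ↔ ¬ c := by
  unfold strictIf; split <;> simp_all

@[simp] lemma suLit_inj_iff {r s : DRule A} : suLit r = suLit s ↔ r = s := by
  simp [suLit]

@[simp] lemma fiLit_inj_iff {r s : DRule A} : fiLit r = fiLit s ↔ r = s := by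
  simp [fiLit]

@[simp] lemma nfiLit_inj_iff {r s : DRule A} : nfiLit r = nfiLit s ↔ r = s := by
  simp [nfiLit]

lemma liftLit_inj {p q : Lit A} (h : liftLit p = liftLit q) : p = q := by
  cases p <;> cases q <;> simp [liftLit] at h <;> simp [h]

@[simp] lemma EForm_rules (D : DTheory A) : (EForm D).rules = EFormRules D := rfl
@[simp] lemma EForm_conflicts (D : DTheory A) :
    (EForm D).conflicts = CMin (A ⊕ DRule A × Bool) := rfl

lemma mem_EFormRules_iff {D : DTheory A} {e : DRule (A ⊕ DRule A × Bool)} :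
    e ∈ EFormRules D ↔
      ((∃ r ∈ D.rules, e = DRule.mk RuleKind.strict (liftLit '' r.body) (suLit r)) ∨
       (∃ r ∈ D.rules,
         e = DRule.mk (strictIf (r.kind = RuleKind.strict)) {suLit r} (fiLit r)) ∨
       (∃ r ∈ D.rules, r.kind ≠ RuleKind.defeater ∧
         e = DRule.mk RuleKind.strict {fiLit r} (liftLit r.head))) ∨
      (∃ r ∈ D.Rd, ∃ c ∈ D.conflicts, r.head ∈ c ∧
        ∃ s : Lit A → DRule A,
          (∀ q ∈ c \ {r.head}, s q ∈ D.rules ∧ (s q).head = q ∧ ¬ D.prec (s q) r) ∧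
          e = DRule.mk
            (strictIf (∀ q ∈ c \ {r.head},
              (s q).kind = RuleKind.strict ∨ D.prec r (s q)))
            ((fun q => suLit (s q)) '' (c \ {r.head})) (nfiLit r)) := by
  simp only [EFormRules, Set.mem_union, Set.mem_setOf_eq, or_assoc]


lemma head_su {D : DTheory A} {e : DRule (A ⊕ DRule A × Bool)} (he : e ∈ EFormRules D)
    {r : DRule A} (hh : e.head = suLit r) :
    r ∈ D.rules ∧ e = DRule.mk RuleKind.strict (liftLit '' r.body) (suLit r) := by
  rcases mem_EFormRules_iff.mp he with
    (⟨r', hr', rfl⟩ | ⟨r', hr', rfl⟩ | ⟨r', hr', hk, rfl⟩) | ⟨r', hr', c, hc, hpc, s, hs, rfl⟩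
  · obtain rfl : r' = r := by simpa using hh
    exact ⟨hr', rfl⟩
  · exact absurd hh (by simp [suLit, fiLit])
  · exact absurd hh (by cases h : r'.head <;> simp [suLit, liftLit, h])
  · exact absurd hh (by simp [suLit, nfiLit])

lemma head_fi {D : DTheory A} {e : DRule (A ⊕ DRule A × Bool)} (he : e ∈ EFormRules D)
    {r : DRule A} (hh : e.head = fiLit r) :
    r ∈ D.rules ∧
      e = DRule.mk (strictIf (r.kind = RuleKind.strict)) {suLit r} (fiLit r) := by
  rcases mem_EFormRules_iff.mp he with
    (⟨r', hr', rfl⟩ | ⟨r', hr', rfl⟩ | ⟨r', hr', hk, rfl⟩) | ⟨r', hr', c, hc, hpc, s, hs, rfl⟩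
  · exact absurd hh (by simp [suLit, fiLit])
  · obtain rfl : r' = r := by simpa using hh
    exact ⟨hr', rfl⟩
  · exact absurd hh (by cases h : r'.head <;> simp [fiLit, liftLit, h])
  · exact absurd hh (by simp [fiLit, nfiLit])

lemma head_lift {D : DTheory A} {e : DRule (A ⊕ DRule A × Bool)} (he : e ∈ EFormRules D)
    {p : Lit A} (hh : e.head = liftLit p) :
    ∃ r ∈ D.rules, r.kind ≠ RuleKind.defeater ∧ r.head = p ∧
      e = DRule.mk RuleKind.strict {fiLit r} (liftLit p) := by
  rcases mem_EFormRules_iff.mp he with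
    (⟨r', hr', rfl⟩ | ⟨r', hr', rfl⟩ | ⟨r', hr', hk, rfl⟩) | ⟨r', hr', c, hc, hpc, s, hs, rfl⟩
  · exact absurd hh (by cases p <;> simp [suLit, liftLit])
  · exact absurd hh (by cases p <;> simp [fiLit, liftLit])
  · have hph : r'.head = p := liftLit_inj hh
    exact ⟨r', hr', hk, hph, by rw [← hph]⟩
  · exact absurd hh (by cases p <;> simp [nfiLit, liftLit])

lemma head_nfi {D : DTheory A} {e : DRule (A ⊕ DRule A × Bool)} (he : e ∈ EFormRules D)
    {r : DRule A} (hh : e.head = nfiLit r) :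
    r ∈ D.Rd ∧ ∃ c ∈ D.conflicts, r.head ∈ c ∧
      ∃ s : Lit A → DRule A,
        (∀ q ∈ c \ {r.head}, s q ∈ D.rules ∧ (s q).head = q ∧ ¬ D.prec (s q) r) ∧
        e = DRule.mk
          (strictIf (∀ q ∈ c \ {r.head},
            (s q).kind = RuleKind.strict ∨ D.prec r (s q)))
          ((fun q => suLit (s q)) '' (c \ {r.head})) (nfiLit r) := by
  rcases mem_EFormRules_iff.mp he with
    (⟨r', hr', rfl⟩ | ⟨r', hr', rfl⟩ | ⟨r', hr', hk, rfl⟩) | ⟨r', hr', c, hc, hpc, s, hs, rfl⟩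
  · exact absurd hh (by simp [suLit, nfiLit])
  · exact absurd hh (by simp [fiLit, nfiLit])
  · exact absurd hh (by cases h : r'.head <;> simp [nfiLit, liftLit, h])
  · obtain rfl : r' = r := by simpa using hh
    exact ⟨hr', c, hc, hpc, s, hs, rfl⟩

lemma suLit_mem_T {D : DTheory A} {IE : Interp (Lit (A ⊕ DRule A × Bool))}
    (hT : TD (EForm D) IE ⊆ IE.1) {r : DRule A} (hr : r ∈ D.rules)
    (hb : ∀ l ∈ r.body, liftLit l ∈ IE.1) : suLit r ∈ IE.1 := by
  apply hT
  refine ⟨DRule.mk RuleKind.strict (liftLit '' r.body) (suLit r),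
    Or.inl (Or.inl (Or.inl ⟨r, hr, rfl⟩)), rfl, ?_, Or.inl rfl⟩
  rintro x ⟨l, hl, rfl⟩
  exact hb l hl

lemma suLit_unfA {D : DTheory A} {IE : Interp (Lit (A ⊕ DRule A × Bool))}
    {r : DRule A} (hr : r ∈ D.rules) (hb : ∃ l ∈ r.body, liftLit l ∈ IE.2) :
    ADLUnfounded (EForm D) IE {suLit r} := by
  intro p hp
  rcases hp with rfl
  have key : ∀ e ∈ (EForm D).rules, e.head = suLit r →
      (e.body ∩ (IE.2 ∪ {suLit r})).Nonempty := by
    intro e he hh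
    obtain ⟨_, rfl⟩ := head_su he hh
    obtain ⟨l, hl, hl2⟩ := hb
    exact ⟨liftLit l, ⟨l, hl, rfl⟩, Or.inl hl2⟩
  refine ⟨fun e he hh => key e he.1 hh, fun e he hh => Or.inl (key e he.1 hh)⟩

lemma suLit_unfN {D : DTheory A} {IE : Interp (Lit (A ⊕ DRule A × Bool))}
    {r : DRule A} (hr : r ∈ D.rules) (hb : ∃ l ∈ r.body, liftLit l ∈ IE.2) :
    NDLUnfounded (EForm D) IE {suLit r} := by
  intro p hp
  rcases hp with rfl
  have key : ∀ e ∈ (EForm D).rules, e.head = suLit r →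
      (e.body ∩ (IE.2 ∪ {suLit r})).Nonempty := by
    intro e he hh
    obtain ⟨_, rfl⟩ := head_su he hh
    obtain ⟨l, hl, hl2⟩ := hb
    exact ⟨liftLit l, ⟨l, hl, rfl⟩, Or.inl hl2⟩
  refine ⟨fun e he hh => key e he.1 hh, fun e he hh => Or.inl (key e he.1 hh)⟩

lemma TD_sub {D : DTheory A} {IE : Interp (Lit (A ⊕ DRule A × Bool))}
    (hT : TD (EForm D) IE ⊆ IE.1)
    (hsu : ∀ r ∈ D.rules, (r.body ∩ (liftLit ⁻¹' IE.2)).Nonempty → suLit r ∈ IE.2) :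
    TD D (liftLit ⁻¹' IE.1, liftLit ⁻¹' IE.2) ⊆ liftLit ⁻¹' IE.1 := by
  rintro p ⟨r, hr, rfl, hb, hk⟩
  have hsuT : suLit r ∈ IE.1 := suLit_mem_T hT hr fun l hl => hb hl
  have hfiT : fiLit r ∈ IE.1 := by
    rcases hk with hstrict | ⟨hdef, hcond⟩
    · exact hT ⟨DRule.mk (strictIf (r.kind = RuleKind.strict)) {suLit r} (fiLit r),
        Or.inl (Or.inl (Or.inr ⟨r, hr, rfl⟩)), rfl,
        Set.singleton_subset_iff.mpr hsuT, Or.inl (strictIf_eq_strict.mpr hstrict)⟩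
    · refine hT ⟨DRule.mk (strictIf (r.kind = RuleKind.strict)) {suLit r} (fiLit r),
        Or.inl (Or.inl (Or.inr ⟨r, hr, rfl⟩)), rfl,
        Set.singleton_subset_iff.mpr hsuT,
        Or.inr ⟨strictIf_eq_defeasible.mpr (by simp [hdef]), ?_⟩⟩
      rintro c' ⟨x, rfl⟩ hmem
      simp only [Set.mem_insert_iff, Set.mem_singleton_iff] at hmem
      rcases hmem with h | h
      · -- fiLit r = Lit.pos x, so x = inr (r, false)
        obtain rfl : Sum.inr (r, false) = x := by simpa [fiLit] using h
        refine ⟨nfiLit r, ⟨Or.inr rfl, by simp [fiLit, nfiLit]⟩, ?_⟩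
        intro s hs hh
        obtain ⟨hrd, c₁, hc₁, hpc₁, sf, hsf, rfl⟩ := head_nfi hs hh
        right
        obtain ⟨q0, hq0, hq0p⟩ := hcond c₁ hc₁ hpc₁
        obtain ⟨hsfr, hsfh, hsfnp⟩ := hsf q0 hq0
        rcases hq0p (sf q0) hsfr hsfh with hprec | hne
        · exact absurd hprec hsfnp
        · exact ⟨suLit (sf q0), ⟨q0, hq0, rfl⟩, hsu _ hsfr hne⟩
      · exact absurd h (by simp [fiLit])
  have hkind : r.kind ≠ RuleKind.defeater := by
    rcases hk with h | ⟨h, _⟩ <;> simp [h]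
  exact hT ⟨DRule.mk RuleKind.strict {fiLit r} (liftLit r.head),
    Or.inl (Or.inr ⟨r, hr, hkind, rfl⟩), rfl,
    Set.singleton_subset_iff.mpr hfiT, Or.inl rfl⟩

lemma UA_sub {D : DTheory A} (hwf : D.WellFormed) {IE : Interp (Lit (A ⊕ DRule A × Bool))}
    (hT : TD (EForm D) IE ⊆ IE.1)
    (hsu : ∀ r ∈ D.rules, (r.body ∩ (liftLit ⁻¹' IE.2)).Nonempty → suLit r ∈ IE.2)
    (hUE : ∀ S, ADLUnfounded (EForm D) IE S → S ⊆ IE.2) :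
    UA D (liftLit ⁻¹' IE.1, liftLit ⁻¹' IE.2) ⊆ liftLit ⁻¹' IE.2 := by
  obtain ⟨-, -, -, -, -, hns, hacyc⟩ := hwf
  rintro p ⟨S, hS, hpS⟩
  set F : Set (Lit A) := liftLit ⁻¹' IE.2 with hF
  set S' : Set (Lit (A ⊕ DRule A × Bool)) :=
    (liftLit '' S ∪
      fiLit '' {r | r ∈ D.rules ∧ r.head ∈ S ∧ r.kind ≠ RuleKind.defeater}) ∪
      suLit '' {r | r ∈ D.rules ∧ r.head ∈ S ∧ (r.body ∩ (F ∪ S)).Nonempty} with hS'def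
  suffices h : ADLUnfounded (EForm D) IE S' by
    exact hUE S' h (Or.inl (Or.inl ⟨p, hpS, rfl⟩))
  intro x hx
  rcases hx with (⟨p0, hp0, rfl⟩ | ⟨r, ⟨hr, hrh, hrk⟩, rfl⟩) | ⟨r, ⟨hr, hrh, hrb⟩, rfl⟩
  · -- x = liftLit p0
    constructor
    · intro e he hh
      obtain ⟨r, hr, hknd, hhead, rfl⟩ := head_lift he.1 hh
      exact ⟨fiLit r, rfl, Or.inr (Or.inl (Or.inr ⟨r, ⟨hr, hhead ▸ hp0, hknd⟩, rfl⟩))⟩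
    · intro e he hh
      obtain ⟨r, hr, hknd, hhead, rfl⟩ := head_lift he.1 hh
      exact absurd he.2 (by simp)
  · -- x = fiLit r
    constructor
    · intro e he hh
      obtain ⟨hr', rfl⟩ := head_fi he.1 hh
      have hstrict : r.kind = RuleKind.strict := strictIf_eq_strict.mp he.2
      have hne : (r.body ∩ (F ∪ S)).Nonempty := (hS r.head hrh).1 r ⟨hr, hstrict⟩ rfl
      exact ⟨suLit r, rfl, Or.inr (Or.inr ⟨r, ⟨hr, hrh, hne⟩, rfl⟩)⟩
    · intro e he hh
      obtain ⟨hr', rfl⟩ := head_fi he.1 hh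
      have hnstrict : ¬ r.kind = RuleKind.strict := strictIf_eq_defeasible.mp he.2
      have hdef : r.kind = RuleKind.defeasible := by
        cases h : r.kind
        · exact absurd h hnstrict
        · rfl
        · exact absurd h hrk
      rcases (hS r.head hrh).2 r ⟨hr, hdef⟩ rfl with hne | ⟨c, hc, hpc, hq⟩
      · exact Or.inl ⟨suLit r, rfl, Or.inr (Or.inr ⟨r, ⟨hr, hrh, hne⟩, rfl⟩)⟩
      · -- escape via conflict c
        right
        classical
        set sf : Lit A → DRule A := fun q =>
          if h : ∃ s, s ∈ D.rules ∧ s.head = q ∧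
              s.body ⊆ (liftLit ⁻¹' IE.1) ∧ (D.prec r s ∨ s.kind = RuleKind.strict)
          then h.choose else DRule.mk RuleKind.strict ∅ q with hsf
        have hsfP : ∀ q ∈ c \ {r.head}, sf q ∈ D.rules ∧ (sf q).head = q ∧
            (sf q).body ⊆ (liftLit ⁻¹' IE.1) ∧
            (D.prec r (sf q) ∨ (sf q).kind = RuleKind.strict) := by
          intro q hqm
          have hex : ∃ s, s ∈ D.rules ∧ s.head = q ∧
              s.body ⊆ (liftLit ⁻¹' IE.1) ∧
              (D.prec r s ∨ s.kind = RuleKind.strict) := hq q hqm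
          rw [hsf]
          simp only [dif_pos hex]
          exact hex.choose_spec
        have hnp : ∀ q ∈ c \ {r.head}, ¬ D.prec (sf q) r := by
          intro q hqm hpr
          obtain ⟨_, _, _, hor⟩ := hsfP q hqm
          rcases hor with hpr2 | hst
          · exact hacyc r ((Relation.TransGen.single hpr2).tail hpr)
          · exact absurd hst (hns _ _ hpr).1
        set e' : DRule (A ⊕ DRule A × Bool) := DRule.mk
          (strictIf (∀ q ∈ c \ {r.head},
            (sf q).kind = RuleKind.strict ∨ D.prec r (sf q)))
          ((fun q => suLit (sf q)) '' (c \ {r.head})) (nfiLit r) with he'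
        have he'mem : e' ∈ EFormRules D :=
          Or.inr ⟨r, ⟨hr, hdef⟩, c, hc, hpc, sf,
            fun q hqm => ⟨(hsfP q hqm).1, (hsfP q hqm).2.1, hnp q hqm⟩, rfl⟩
        have he'strict : e'.kind = RuleKind.strict := by
          rw [he']
          exact strictIf_eq_strict.mpr fun q hqm => (hsfP q hqm).2.2.2.symm
        have he'body : e'.body ⊆ IE.1 := by
          rintro y ⟨q, hqm, rfl⟩
          exact suLit_mem_T hT (hsfP q hqm).1 fun l hl => (hsfP q hqm).2.2.1 hl
        refine ⟨{Lit.pos (Sum.inr (r, false)), Lit.neg (Sum.inr (r, false))},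
          ⟨Sum.inr (r, false), rfl⟩, Or.inl rfl, ?_⟩
        rintro q ⟨hqm, hqne⟩
        rcases hqm with rfl | rfl
        · exact absurd rfl hqne
        · exact ⟨e', he'mem, rfl, he'body, Or.inr he'strict⟩
  · -- x = suLit r
    have key : ∀ e ∈ (EForm D).rules, e.head = suLit r →
        (e.body ∩ (IE.2 ∪ S')).Nonempty := by
      intro e he hh
      obtain ⟨_, rfl⟩ := head_su he hh
      obtain ⟨l, hl, hl2⟩ := hrb
      rcases hl2 with hl2 | hl2
      · exact ⟨liftLit l, ⟨l, hl, rfl⟩, Or.inl hl2⟩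
      · exact ⟨liftLit l, ⟨l, hl, rfl⟩, Or.inr (Or.inl (Or.inl ⟨l, hl2, rfl⟩))⟩
    exact ⟨fun e he hh => key e he.1 hh, fun e he hh => Or.inl (key e he.1 hh)⟩

lemma UN_sub {D : DTheory A} {IE : Interp (Lit (A ⊕ DRule A × Bool))}
    (hT : TD (EForm D) IE ⊆ IE.1)
    (hUE : ∀ S, NDLUnfounded (EForm D) IE S → S ⊆ IE.2) :
    UN D (liftLit ⁻¹' IE.1, liftLit ⁻¹' IE.2) ⊆ liftLit ⁻¹' IE.2 := by
  rintro p ⟨S, hS, hpS⟩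
  set F : Set (Lit A) := liftLit ⁻¹' IE.2 with hF
  set S' : Set (Lit (A ⊕ DRule A × Bool)) :=
    (liftLit '' S ∪
      fiLit '' {r | r ∈ D.rules ∧ r.head ∈ S ∧ r.kind ≠ RuleKind.defeater}) ∪
      suLit '' {r | r ∈ D.rules ∧ r.head ∈ S ∧ (r.body ∩ (F ∪ S)).Nonempty} with hS'def
  suffices h : NDLUnfounded (EForm D) IE S' by
    exact hUE S' h (Or.inl (Or.inl ⟨p, hpS, rfl⟩))
  intro x hx
  rcases hx with (⟨p0, hp0, rfl⟩ | ⟨r, ⟨hr, hrh, hrk⟩, rfl⟩) | ⟨r, ⟨hr, hrh, hrb⟩, rfl⟩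
  · constructor
    · intro e he hh
      obtain ⟨r, hr, hknd, hhead, rfl⟩ := head_lift he.1 hh
      exact ⟨fiLit r, rfl, Or.inr (Or.inl (Or.inr ⟨r, ⟨hr, hhead ▸ hp0, hknd⟩, rfl⟩))⟩
    · intro e he hh
      obtain ⟨r, hr, hknd, hhead, rfl⟩ := head_lift he.1 hh
      exact absurd he.2 (by simp)
  · constructor
    · intro e he hh
      obtain ⟨hr', rfl⟩ := head_fi he.1 hh
      have hstrict : r.kind = RuleKind.strict := strictIf_eq_strict.mp he.2
      have hne : (r.body ∩ (F ∪ S)).Nonempty := (hS r.head hrh).1 r ⟨hr, hstrict⟩ rfl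
      exact ⟨suLit r, rfl, Or.inr (Or.inr ⟨r, ⟨hr, hrh, hne⟩, rfl⟩)⟩
    · intro e he hh
      obtain ⟨hr', rfl⟩ := head_fi he.1 hh
      have hnstrict : ¬ r.kind = RuleKind.strict := strictIf_eq_defeasible.mp he.2
      have hdef : r.kind = RuleKind.defeasible := by
        cases h : r.kind
        · exact absurd h hnstrict
        · rfl
        · exact absurd h hrk
      rcases (hS r.head hrh).2 r ⟨hr, hdef⟩ rfl with hne | ⟨c, hc, hpc, hq⟩
      · exact Or.inl ⟨suLit r, rfl, Or.inr (Or.inr ⟨r, ⟨hr, hrh, hne⟩, rfl⟩)⟩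
      · right
        classical
        set sf : Lit A → DRule A := fun q =>
          if h : ∃ s, s ∈ D.rules ∧ s.head = q ∧
              s.body ⊆ (liftLit ⁻¹' IE.1) ∧ ¬ D.prec s r
          then h.choose else DRule.mk RuleKind.strict ∅ q with hsf
        have hsfP : ∀ q ∈ c \ {r.head}, sf q ∈ D.rules ∧ (sf q).head = q ∧
            (sf q).body ⊆ (liftLit ⁻¹' IE.1) ∧ ¬ D.prec (sf q) r := by
          intro q hqm
          have hex : ∃ s, s ∈ D.rules ∧ s.head = q ∧
              s.body ⊆ (liftLit ⁻¹' IE.1) ∧ ¬ D.prec s r := hq q hqm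
          rw [hsf]
          simp only [dif_pos hex]
          exact hex.choose_spec
        set e' : DRule (A ⊕ DRule A × Bool) := DRule.mk
          (strictIf (∀ q ∈ c \ {r.head},
            (sf q).kind = RuleKind.strict ∨ D.prec r (sf q)))
          ((fun q => suLit (sf q)) '' (c \ {r.head})) (nfiLit r) with he'
        have he'mem : e' ∈ EFormRules D :=
          Or.inr ⟨r, ⟨hr, hdef⟩, c, hc, hpc, sf,
            fun q hqm => ⟨(hsfP q hqm).1, (hsfP q hqm).2.1, (hsfP q hqm).2.2.2⟩, rfl⟩
        have he'body : e'.body ⊆ IE.1 := by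
          rintro y ⟨q, hqm, rfl⟩
          exact suLit_mem_T hT (hsfP q hqm).1 fun l hl => (hsfP q hqm).2.2.1 hl
        refine ⟨{Lit.pos (Sum.inr (r, false)), Lit.neg (Sum.inr (r, false))},
          ⟨Sum.inr (r, false), rfl⟩, Or.inl rfl, ?_⟩
        rintro q ⟨hqm, hqne⟩
        rcases hqm with rfl | rfl
        · exact absurd rfl hqne
        · exact ⟨e', he'mem, rfl, he'body, fun h => h⟩
  · have key : ∀ e ∈ (EForm D).rules, e.head = suLit r →
        (e.body ∩ (IE.2 ∪ S')).Nonempty := by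
      intro e he hh
      obtain ⟨_, rfl⟩ := head_su he hh
      obtain ⟨l, hl, hl2⟩ := hrb
      rcases hl2 with hl2 | hl2
      · exact ⟨liftLit l, ⟨l, hl, rfl⟩, Or.inl hl2⟩
      · exact ⟨liftLit l, ⟨l, hl, rfl⟩, Or.inr (Or.inl (Or.inl ⟨l, hl2, rfl⟩))⟩
    exact ⟨fun e he hh => key e he.1 hh, fun e he hh => Or.inl (key e he.1 hh)⟩

lemma TD_mono (D : DTheory A) {I I' : Interp (Lit A)} (h1 : I.1 ⊆ I'.1)
    (h2 : I.2 ⊆ I'.2) : TD D I ⊆ TD D I' := by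
  rintro p ⟨r, hr, rfl, hb, hk⟩
  refine ⟨r, hr, rfl, hb.trans h1, ?_⟩
  rcases hk with h | ⟨hd, hc⟩
  · exact Or.inl h
  · refine Or.inr ⟨hd, fun c hcc hpc => ?_⟩
    obtain ⟨q, hq, hall⟩ := hc c hcc hpc
    refine ⟨q, hq, fun s hs hh => ?_⟩
    rcases hall s hs hh with h | ⟨l, hl1, hl2⟩
    · exact Or.inl h
    · exact Or.inr ⟨l, hl1, h2 hl2⟩

lemma WA_mono (D : DTheory A) : Monotone (WA D) := by
  intro I I' hII
  obtain ⟨h1, h2⟩ := Prod.le_def.mp hII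
  refine Prod.le_def.mpr ⟨TD_mono D h1 h2, ?_⟩
  rintro p ⟨S, hS, hpS⟩
  refine ⟨S, ?_, hpS⟩
  intro x hx
  obtain ⟨hstr, hdef⟩ := hS x hx
  constructor
  · intro r hr hh
    obtain ⟨l, hl1, hl2⟩ := hstr r hr hh
    exact ⟨l, hl1, hl2.imp (fun h => h2 h) id⟩
  · intro r hr hh
    rcases hdef r hr hh with ⟨l, hl1, hl2⟩ | ⟨c, hc, hpc, hq⟩
    · exact Or.inl ⟨l, hl1, hl2.imp (fun h => h2 h) id⟩
    · refine Or.inr ⟨c, hc, hpc, fun q hqm => ?_⟩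
      obtain ⟨s, hs, hh', hb, hor⟩ := hq q hqm
      exact ⟨s, hs, hh', hb.trans h1, hor⟩

lemma WN_mono (D : DTheory A) : Monotone (WN D) := by
  intro I I' hII
  obtain ⟨h1, h2⟩ := Prod.le_def.mp hII
  refine Prod.le_def.mpr ⟨TD_mono D h1 h2, ?_⟩
  rintro p ⟨S, hS, hpS⟩
  refine ⟨S, ?_, hpS⟩
  intro x hx
  obtain ⟨hstr, hdef⟩ := hS x hx
  constructor
  · intro r hr hh
    obtain ⟨l, hl1, hl2⟩ := hstr r hr hh
    exact ⟨l, hl1, hl2.imp (fun h => h2 h) id⟩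
  · intro r hr hh
    rcases hdef r hr hh with ⟨l, hl1, hl2⟩ | ⟨c, hc, hpc, hq⟩
    · exact Or.inl ⟨l, hl1, hl2.imp (fun h => h2 h) id⟩
    · refine Or.inr ⟨c, hc, hpc, fun q hqm => ?_⟩
      obtain ⟨s, hs, hh', hb, hor⟩ := hq q hqm
      exact ⟨s, hs, hh', hb.trans h1, hor⟩

end DLWFS

namespace DLWFS

/-- Let `D` be a defeasible theory with `C_D[p]` finite for all literals `p`, and `E`
its defeater- and priority-free form. Taking the well-founded models of `D` and `E`
both under ADL, or both under NDL: for every literal `p` of `D`, if `p ∈ T_{D,WF}`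
then `p ∈ T_{E,WF}`, and if `p ∈ F_{D,WF}` then `p ∈ F_{E,WF}`. -/
theorem eform_sound {A : Type*} (D : DTheory A) (hwf : D.WellFormed)
    (hfin : ∀ p : Lit A, (D.Cset p).Finite) :
    (∀ (ID : Interp (Lit A)) (IE : Interp (Lit (A ⊕ DRule A × Bool))),
      IsWFModel (WA D) ID → IsWFModel (WA (EForm D)) IE →
      ∀ p : Lit A, (p ∈ ID.1 → liftLit p ∈ IE.1) ∧ (p ∈ ID.2 → liftLit p ∈ IE.2)) ∧
    (∀ (ID : Interp (Lit A)) (IE : Interp (Lit (A ⊕ DRule A × Bool))),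
      IsWFModel (WN D) ID → IsWFModel (WN (EForm D)) IE →
      ∀ p : Lit A, (p ∈ ID.1 → liftLit p ∈ IE.1) ∧ (p ∈ ID.2 → liftLit p ∈ IE.2)) := by
  constructor
  · intro ID IE hID hIE p
    have hfixE : WA (EForm D) IE = IE := hIE.1
    have hT : TD (EForm D) IE ⊆ IE.1 := le_of_eq (congrArg Prod.fst hfixE)
    have hUE : ∀ S, ADLUnfounded (EForm D) IE S → S ⊆ IE.2 := fun S hS =>
      (congrArg Prod.snd hfixE) ▸ Set.subset_sUnion_of_mem hS
    have hsu : ∀ r ∈ D.rules, (r.body ∩ (liftLit ⁻¹' IE.2)).Nonempty →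
        suLit r ∈ IE.2 := by
      intro r hr ⟨l, hl1, hl2⟩
      exact hUE _ (suLit_unfA hr ⟨l, hl1, hl2⟩) rfl
    set J : Interp (Lit A) := (liftLit ⁻¹' IE.1, liftLit ⁻¹' IE.2) with hJ
    have hpre : WA D J ≤ J :=
      Prod.le_def.mpr ⟨TD_sub hT hsu, UA_sub hwf hT hsu hUE⟩
    let f : Interp (Lit A) →o Interp (Lit A) := ⟨WA D, WA_mono D⟩
    have hfix : WA D (OrderHom.lfp f) = OrderHom.lfp f := f.map_lfp
    have hle1 := hID.2 (OrderHom.lfp f) hfix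
    have hle2 : OrderHom.lfp f ≤ J := OrderHom.lfp_le f hpre
    obtain ⟨hle21, hle22⟩ := Prod.le_def.mp hle2
    exact ⟨fun hp => hle21 (hle1.1 hp), fun hp => hle22 (hle1.2 hp)⟩
  · intro ID IE hID hIE p
    have hfixE : WN (EForm D) IE = IE := hIE.1
    have hT : TD (EForm D) IE ⊆ IE.1 := le_of_eq (congrArg Prod.fst hfixE)
    have hUE : ∀ S, NDLUnfounded (EForm D) IE S → S ⊆ IE.2 := fun S hS =>
      (congrArg Prod.snd hfixE) ▸ Set.subset_sUnion_of_mem hS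
    have hsu : ∀ r ∈ D.rules, (r.body ∩ (liftLit ⁻¹' IE.2)).Nonempty →
        suLit r ∈ IE.2 := by
      intro r hr ⟨l, hl1, hl2⟩
      exact hUE _ (suLit_unfN hr ⟨l, hl1, hl2⟩) rfl
    set J : Interp (Lit A) := (liftLit ⁻¹' IE.1, liftLit ⁻¹' IE.2) with hJ
    have hpre : WN D J ≤ J :=
      Prod.le_def.mpr ⟨TD_sub hT hsu, UN_sub hT hUE⟩
    let f : Interp (Lit A) →o Interp (Lit A) := ⟨WN D, WN_mono D⟩
    have hfix : WN D (OrderHom.lfp f) = OrderHom.lfp f := f.map_lfp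
    have hle1 := hID.2 (OrderHom.lfp f) hfix
    have hle2 : OrderHom.lfp f ≤ J := OrderHom.lfp_le f hpre
    obtain ⟨hle21, hle22⟩ := Prod.le_def.mp hle2
    exact ⟨fun hp => hle21 (hle1.1 hp), fun hp => hle22 (hle1.2 hp)⟩

end DLWFS
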